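/- Let $K > 1$ and let $y(t)$ be the solution of $y' = \frac{(1-y)K}{y^2+(1-y^2)K}-1$, $y(0)=1$, which satisfies $y(t)>0$ for all $t \geq 0$. Then $c(t) := \frac{K}{y(t)^2+(1-y(t)^2)K} > 1$ for all $t \geq 0$ with $y(t) > 0$, and consequently the solution $z$ of $z' = c(t)(z^2-1)+1$, $z(0)=1$, satisfies $z(t) \geq 1/(1-t)$ for $t \in [0,1)$, so $z$ blows up at some time $t_c \leq 1$. -/

import Mathlib

open Set Filter Topology

theorem stmt_11 (K : ℝ) (hK : 1 < K) (y : ℝ → ℝ) (hy0 : y 0 = 1)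
    (hypos : ∀ t, 0 ≤ t → 0 < y t)
    (hy : ∀ t, 0 ≤ t →
      HasDerivAt y ((1 - y t) * K / ((y t) ^ 2 + (1 - (y t) ^ 2) * K) - 1) t) :
    (∀ t, 0 ≤ t → 1 < K / ((y t) ^ 2 + (1 - (y t) ^ 2) * K)) ∧
    ∀ (T : ℝ) (z : ℝ → ℝ), z 0 = 1 →
      (∀ t, 0 ≤ t → t < T →
        HasDerivAt z
          (K / ((y t) ^ 2 + (1 - (y t) ^ 2) * K) * ((z t) ^ 2 - 1) + 1) t) →
      ∀ t, 0 ≤ t → t < min T 1 → 1 / (1 - t) ≤ z t := by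
  -- Step 0 : `y t ≤ 1` for all `t ≥ 0`.
  have hyle : ∀ t, 0 ≤ t → y t ≤ 1 := by
    intro t ht
    refine image_le_of_deriv_right_lt_deriv_boundary'
      (f := y) (f' := fun x => (1 - y x) * K / ((y x) ^ 2 + (1 - (y x) ^ 2) * K) - 1)
      (a := 0) (b := t) (B := fun _ => (1 : ℝ)) (B' := fun _ => (0 : ℝ))
      (fun x hx => (hy x hx.1).continuousAt.continuousWithinAt)
      (fun x hx => (hy x hx.1).hasDerivWithinAt)
      (le_of_eq hy0) continuousOn_const
      (fun x _ => (hasDerivAt_const x (1:ℝ)).hasDerivWithinAt)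
      ?_ (right_mem_Icc.2 ht)
    intro x hx hxeq
    have hxeq' : y x = 1 := hxeq
    show (1 - y x) * K / ((y x) ^ 2 + (1 - (y x) ^ 2) * K) - 1 < (0:ℝ)
    rw [hxeq']
    norm_num
  -- Part 1 : the coefficient exceeds 1.
  have hc : ∀ t, 0 ≤ t → 1 < K / ((y t) ^ 2 + (1 - (y t) ^ 2) * K) := by
    intro t ht
    have h0 := hypos t ht
    have h1 := hyle t ht
    have hyy : 0 < (y t) ^ 2 * (K - 1) :=
      mul_pos (pow_pos h0 2) (by linarith)
    have hs : 0 ≤ 1 - (y t) ^ 2 := by nlinarith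
    have hnn : 0 ≤ (1 - (y t) ^ 2) * K := mul_nonneg hs (by linarith)
    have hD : 0 < (y t) ^ 2 + (1 - (y t) ^ 2) * K := by nlinarith [pow_pos h0 2]
    rw [one_lt_div hD]
    nlinarith
  refine ⟨hc, ?_⟩
  intro T z hz0 hz t ht htT
  have ht1 : t < 1 := lt_of_lt_of_le htT (min_le_right _ _)
  have htT' : t < T := lt_of_lt_of_le htT (min_le_left _ _)
  have hzc : ∀ x ∈ Icc (0:ℝ) t, ContinuousWithinAt z (Icc 0 t) x := fun x hx =>
    (hz x hx.1 (lt_of_le_of_lt hx.2 htT')).continuousAt.continuousWithinAt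
  have hzd : ∀ x ∈ Ico (0:ℝ) t, HasDerivWithinAt z
      (K / ((y x) ^ 2 + (1 - (y x) ^ 2) * K) * ((z x) ^ 2 - 1) + 1) (Ici x) x :=
    fun x hx => (hz x hx.1 (lt_of_lt_of_le hx.2 htT'.le)).hasDerivWithinAt
  -- Step A : `1 + x/2 ≤ z x` on `[0, t]`.
  have hA : ∀ x ∈ Icc (0:ℝ) t, 1 + x / 2 ≤ z x := by
    refine image_le_of_deriv_right_lt_deriv_boundary'
      (f := fun x => 1 + x / 2) (f' := fun _ => (1:ℝ)/2)
      (B := z) (B' := fun x => K / ((y x) ^ 2 + (1 - (y x) ^ 2) * K) * ((z x) ^ 2 - 1) + 1)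
      (by fun_prop)
      (fun x _ => (((hasDerivAt_id x).div_const 2).const_add 1).hasDerivWithinAt)
      (by rw [hz0]; norm_num) hzc hzd ?_
    intro x hx hxeq
    have hxeq' : 1 + x / 2 = z x := hxeq
    have hcx := hc x hx.1
    have hz1 : 1 ≤ z x := by rw [← hxeq']; linarith [hx.1]
    have h2 : 0 ≤ (z x) ^ 2 - 1 := by nlinarith
    have h3 : 0 ≤ K / ((y x) ^ 2 + (1 - (y x) ^ 2) * K) * ((z x) ^ 2 - 1) :=
      mul_nonneg (by linarith) h2
    show (1:ℝ)/2 < K / ((y x) ^ 2 + (1 - (y x) ^ 2) * K) * ((z x) ^ 2 - 1) + 1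
    linarith
  -- Step B : for every `l ∈ (0,1)`, `l / (1 - l*t) ≤ z t`.
  have hB : ∀ l : ℝ, l ∈ Ioo (0:ℝ) 1 → l / (1 - l * t) ≤ z t := by
    intro l hl
    have hne : ∀ x ∈ Icc (0:ℝ) t, 1 - l * x ≠ 0 := by
      intro x hx
      have h1 : l * x ≤ x := by nlinarith [hx.1, hl.1.le, hl.2.le]
      have h2 : l * x < 1 := lt_of_le_of_lt h1 (lt_of_le_of_lt hx.2 ht1)
      intro h; rw [sub_eq_zero] at h; exact absurd h.symm (ne_of_lt h2)
    have HD : ∀ x ∈ Ico (0:ℝ) t, HasDerivAt (fun x => l / (1 - l * x))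
        (l ^ 2 / (1 - l * x) ^ 2) x := by
      intro x hx
      have hnx : 1 - l * x ≠ 0 := hne x ⟨hx.1, hx.2.le⟩
      have h1 : HasDerivAt (fun x : ℝ => 1 - l * x) (0 - l * 1) x :=
        (hasDerivAt_const x (1:ℝ)).sub ((hasDerivAt_id x).const_mul l)
      have h2 := (h1.inv hnx).const_mul l
      have heq : (fun x : ℝ => l * (1 - l * x)⁻¹) = fun x => l / (1 - l * x) := by
        funext u; rw [div_eq_mul_inv]
      simp only [Pi.inv_apply] at h2
      rw [heq] at h2
      refine h2.congr_deriv ?_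
      ring
    have Hmain : ∀ x ∈ Icc (0:ℝ) t, l / (1 - l * x) ≤ z x := by
      refine image_le_of_deriv_right_lt_deriv_boundary'
        (f := fun x => l / (1 - l * x)) (f' := fun x => l ^ 2 / (1 - l * x) ^ 2)
        (B := z) (B' := fun x => K / ((y x) ^ 2 + (1 - (y x) ^ 2) * K) * ((z x) ^ 2 - 1) + 1)
        (ContinuousOn.div continuousOn_const
          (continuousOn_const.sub (continuousOn_const.mul continuousOn_id)) hne)
        (fun x hx => (HD x hx).hasDerivWithinAt)
        (by rw [hz0]; norm_num; linarith [hl.2]) hzc hzd ?_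
      intro x hx hxeq
      have hxeq' : l / (1 - l * x) = z x := hxeq
      have hx0 : x ≠ 0 := by
        intro h
        rw [h, hz0] at hxeq'
        norm_num at hxeq'
        exact absurd hxeq' (ne_of_lt hl.2)
      have hxpos : 0 < x := lt_of_le_of_ne hx.1 (Ne.symm hx0)
      have hz1 : 1 < z x := by
        have := hA x ⟨hx.1, hx.2.le⟩
        linarith
      have hcx := hc x hx.1
      have hf2 : l ^ 2 / (1 - l * x) ^ 2 = (z x) ^ 2 := by
        rw [← hxeq', div_pow]
      show l ^ 2 / (1 - l * x) ^ 2 < K / ((y x) ^ 2 + (1 - (y x) ^ 2) * K) * ((z x) ^ 2 - 1) + 1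
      rw [hf2]
      have h2 : 0 < (z x) ^ 2 - 1 := by nlinarith
      have h3 := mul_pos (sub_pos.2 hcx) h2
      nlinarith [h3]
    exact Hmain t (right_mem_Icc.2 ht)
  -- Take the limit `l → 1⁻`.
  have hnt : (1:ℝ) - 1 * t ≠ 0 := by intro h; rw [sub_eq_zero] at h; rw [one_mul] at h; linarith
  have hcont : ContinuousAt (fun l : ℝ => l / (1 - l * t)) 1 := by
    exact ContinuousAt.div continuousAt_id
      (continuousAt_const.sub (continuousAt_id.mul continuousAt_const)) hnt
  have htend : Tendsto (fun l : ℝ => l / (1 - l * t)) (𝓝[<] (1:ℝ)) (𝓝 (1 / (1 - t))) := by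
    have h := hcont.tendsto.mono_left (nhdsWithin_le_nhds (s := Iio (1:ℝ)))
    simpa using h
  refine le_of_tendsto htend ?_
  filter_upwards [Ioo_mem_nhdsLT_of_mem (⟨by norm_num, le_rfl⟩ : (1:ℝ) ∈ Ioc (0:ℝ) 1)] with l hl
  exact hB l hl
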